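/- Let A and Â be as above (A block upper triangular of rank Ñ, Â its block-diagonal part). If rank(Â) < Ñ, then for every choice of Ñ columns of A whose degree sum equals ν̃ = Σ_k k·ñ_k, those columns of A are linearly dependent. Hence rank(Â) = Ñ if and only if there exist Ñ linearly independent columns of A with degree sum ν̃. -/

import Mathlib

open Matrix

/-- Key determinant lemma: if the degree sums match, each permutation term of the
determinant of the selected square submatrix agrees between `A` and `Ah`. -/
lemma stmt5_det_eq {N Nt : ℕ} (A Ah : Matrix (Fin Nt) (Fin N) ℝ)
    (rdeg : Fin Nt → ℕ) (cdeg : Fin N → ℕ)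
    (htri : ∀ i j, cdeg j < rdeg i → A i j = 0)
    (hAh : ∀ i j, Ah i j = if rdeg i = cdeg j then A i j else 0)
    (g : Fin Nt → Fin N)
    (hsum : ∑ k, cdeg (g k) = ∑ i, rdeg i) :
    (A.submatrix id g).det = (Ah.submatrix id g).det := by
  rw [Matrix.det_apply, Matrix.det_apply]
  refine Finset.sum_congr rfl fun σ _ => ?_
  congr 1
  by_cases hall : ∀ k, rdeg (σ k) = cdeg (g k)
  · refine Finset.prod_congr rfl fun k _ => ?_
    simp [Matrix.submatrix_apply, hAh, hall k]
  · push_neg at hall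
    obtain ⟨k₀, hk₀⟩ := hall
    by_cases hlt : ∃ k, cdeg (g k) < rdeg (σ k)
    · obtain ⟨k₁, hk₁⟩ := hlt
      have hne : rdeg (σ k₁) ≠ cdeg (g k₁) := by omega
      rw [Finset.prod_eq_zero (Finset.mem_univ k₁), Finset.prod_eq_zero (Finset.mem_univ k₁)]
      · simp [Matrix.submatrix_apply, hAh, hne]
      · simp [Matrix.submatrix_apply, htri _ _ hk₁]
    · push_neg at hlt
      exfalso
      have h1 : ∑ k, rdeg (σ k) = ∑ i, rdeg i := Equiv.sum_comp σ rdeg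
      have h2 : ∑ k, rdeg (σ k) < ∑ k, cdeg (g k) :=
        Finset.sum_lt_sum (fun k _ => hlt k)
          ⟨k₀, Finset.mem_univ _, lt_of_le_of_ne (hlt k₀) hk₀⟩
      omega

/-- Linear independence of the columns indexed by `s` is equivalent to the
invertibility of the corresponding square submatrix. -/
lemma stmt5_li_iff {N Nt : ℕ} (M : Matrix (Fin Nt) (Fin N) ℝ)
    (s : Finset (Fin N)) (hcard : s.card = Nt) :
    LinearIndependent ℝ (fun j : s => M.transpose (j : Fin N)) ↔
      IsUnit (M.submatrix id (fun k => ((s.orderIsoOfFin hcard k : s) : Fin N))) := by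
  set g : Fin Nt → Fin N := fun k => ((s.orderIsoOfFin hcard k : s) : Fin N) with hg
  have h1 : LinearIndependent ℝ (fun j : s => M.transpose (j : Fin N)) ↔
      LinearIndependent ℝ (fun k : Fin Nt => M.transpose (g k)) := by
    rw [← linearIndependent_equiv (s.orderIsoOfFin hcard).toEquiv
      (f := fun j : s => M.transpose (j : Fin N))]
    rfl
  have heq : (fun k : Fin Nt => M.transpose (g k)) =
      fun k : Fin Nt => (M.submatrix id g).transpose k := by
    funext k; ext i; simp
  rw [h1, heq]; exact Matrix.linearIndependent_cols_iff_isUnit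

lemma stmt5_rank_le {N Nt : ℕ} (M : Matrix (Fin Nt) (Fin N) ℝ) : M.rank ≤ Nt := by
  simpa using M.rank_le_card_height

/-- An invertible `Nt × Nt` submatrix forces full rank. -/
lemma stmt5_rank_eq {N Nt : ℕ} (M : Matrix (Fin Nt) (Fin N) ℝ)
    (g : Fin Nt → Fin N) (h : IsUnit (M.submatrix id g)) : M.rank = Nt := by
  refine le_antisymm (stmt5_rank_le M) ?_
  have hli : LinearIndependent ℝ (fun k : Fin Nt => (M.submatrix id g).transpose k) :=
    Matrix.linearIndependent_cols_iff_isUnit.2 h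
  have heq : (fun k : Fin Nt => (M.submatrix id g).transpose k) =
      fun k : Fin Nt => M.transpose (g k) := by
    funext k; ext i; simp
  rw [heq] at hli
  have h1 : Submodule.span ℝ (Set.range fun k : Fin Nt => M.transpose (g k)) ≤
      Submodule.span ℝ (Set.range M.transpose) :=
    Submodule.span_mono (Set.range_comp_subset_range g M.transpose)
  have h2 : Module.finrank ℝ
      (Submodule.span ℝ (Set.range fun k : Fin Nt => M.transpose (g k))) = Nt := by
    rw [finrank_span_eq_card hli, Fintype.card_fin]
  calc (Nt : ℕ) = _ := h2.symm
    _ ≤ Module.finrank ℝ (Submodule.span ℝ (Set.range M.transpose)) :=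
        Submodule.finrank_mono h1
    _ = M.rank := (Matrix.rank_eq_finrank_span_cols M).symm

/-- Full rank gives `Nt` linearly independent columns. -/
lemma stmt5_exists_cols {N Nt : ℕ} (M : Matrix (Fin Nt) (Fin N) ℝ)
    (h : M.rank = Nt) : ∃ s : Finset (Fin N), s.card = Nt ∧
      LinearIndependent ℝ (fun j : s => M.transpose (j : Fin N)) := by
  obtain ⟨b, hb, hspan, hli⟩ := exists_linearIndependent ℝ (Set.range M.transpose)
  have hbfin : b.Finite := (Set.finite_range M.transpose).subset hb
  haveI : Fintype b := hbfin.fintype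
  have hcardb : b.toFinset.card = Nt := by
    rw [← finrank_span_set_eq_card hli, hspan]; exact (Matrix.rank_eq_finrank_span_cols M).symm.trans h
  -- choose a column index for each element of b
  have hch : ∀ x : b, ∃ j : Fin N, M.transpose j = (x : Fin Nt → ℝ) :=
    fun x => hb x.2
  choose f hf using hch
  have hfinj : Function.Injective f := by
    intro x y hxy
    have : (x : Fin Nt → ℝ) = (y : Fin Nt → ℝ) := by rw [← hf x, ← hf y, hxy]
    exact Subtype.ext this
  refine ⟨Finset.univ.image f, ?_, ?_⟩
  · rw [Finset.card_image_of_injective _ hfinj, Finset.card_univ,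
      ← Set.toFinset_card, hcardb]
  · set s : Finset (Fin N) := Finset.univ.image f with hs
    have hmem : ∀ x : b, f x ∈ s := fun x => Finset.mem_image_of_mem f (Finset.mem_univ x)
    have hbij : Function.Bijective (fun x : b => (⟨f x, hmem x⟩ : s)) := by
      constructor
      · intro x y hxy
        exact hfinj (congrArg Subtype.val hxy)
      · rintro ⟨j, hj⟩
        rw [hs] at hj
        obtain ⟨x, _, hx⟩ := Finset.mem_image.1 hj
        exact ⟨x, Subtype.ext hx⟩
    have hcomp : ((fun j : s => M.transpose (j : Fin N)) ∘ Equiv.ofBijective _ hbij) =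
        ((↑) : b → Fin Nt → ℝ) := by
      funext x
      exact hf x
    exact (linearIndependent_equiv' (Equiv.ofBijective _ hbij) hcomp).1 hli

/-- Characterization of characteristic points: if the block-diagonal part `Ah`
of a block upper triangular full-rank matrix `A` has rank `< Nt`, then every
choice of `Nt` columns of `A` with degree sum `ν̃ = ∑ i, rdeg i` is linearly
dependent; and `Ah` has rank `Nt` iff there exist `Nt` linearly independent
columns of `A` with degree sum `ν̃`. -/
theorem stmt_5 {N Nt M Mt : ℕ} (A Ah : Matrix (Fin Nt) (Fin N) ℝ)
    (rdeg : Fin Nt → ℕ) (cdeg : Fin N → ℕ)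
    (hr : ∀ i, 1 ≤ rdeg i ∧ rdeg i ≤ Mt) (hc : ∀ j, 1 ≤ cdeg j ∧ cdeg j ≤ M)
    (hMM : Mt ≤ M)
    (htri : ∀ i j, cdeg j < rdeg i → A i j = 0)
    (hAh : ∀ i j, Ah i j = if rdeg i = cdeg j then A i j else 0)
    (hrankA : A.rank = Nt) :
    (Ah.rank < Nt → ∀ s : Finset (Fin N), s.card = Nt →
      ∑ j ∈ s, cdeg j = ∑ i, rdeg i →
      ¬ LinearIndependent ℝ (fun j : s => A.transpose (j : Fin N))) ∧
    (Ah.rank = Nt ↔ ∃ s : Finset (Fin N), s.card = Nt ∧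
      LinearIndependent ℝ (fun j : s => A.transpose (j : Fin N)) ∧
      ∑ j ∈ s, cdeg j = ∑ i, rdeg i) := by
  -- sum over s equals sum over the enumeration
  have hsum_enum : ∀ (s : Finset (Fin N)) (hcard : s.card = Nt),
      ∑ k, cdeg ((s.orderIsoOfFin hcard k : s) : Fin N) = ∑ j ∈ s, cdeg j := by
    intro s hcard
    calc ∑ k, cdeg ((s.orderIsoOfFin hcard k : s) : Fin N)
        = ∑ j : s, cdeg (j : Fin N) :=
          Equiv.sum_comp (s.orderIsoOfFin hcard).toEquiv (fun j : s => cdeg (j : Fin N))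
      _ = ∑ j ∈ s, cdeg j := Finset.sum_coe_sort s cdeg
  -- main implication: independent A-columns with matching degree sum force Ah full rank
  have main : ∀ (s : Finset (Fin N)) (hcard : s.card = Nt),
      (∑ j ∈ s, cdeg j = ∑ i, rdeg i) →
      LinearIndependent ℝ (fun j : s => A.transpose (j : Fin N)) → Ah.rank = Nt := by
    intro s hcard hsum hli
    set g : Fin Nt → Fin N := fun k => ((s.orderIsoOfFin hcard k : s) : Fin N) with hg
    have hgsum : ∑ k, cdeg (g k) = ∑ i, rdeg i := by
      rw [hg]; rw [hsum_enum s hcard]; exact hsum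
    have hA : IsUnit (A.submatrix id g) := (stmt5_li_iff A s hcard).1 hli
    have hdet : (A.submatrix id g).det ≠ 0 := by
      intro h0
      exact ((Matrix.isUnit_iff_isUnit_det _).1 hA).ne_zero (by rw [h0])
    have hdet' : (Ah.submatrix id g).det ≠ 0 := by
      rw [← stmt5_det_eq A Ah rdeg cdeg htri hAh g hgsum]; exact hdet
    exact stmt5_rank_eq Ah g ((Matrix.isUnit_iff_isUnit_det _).2 (isUnit_iff_ne_zero.2 hdet'))
  constructor
  · intro hlt s hcard hsum hli
    exact absurd (main s hcard hsum hli) (by omega)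
  · constructor
    · intro hrank
      obtain ⟨s, hcard, hliAh⟩ := stmt5_exists_cols Ah hrank
      set g : Fin Nt → Fin N := fun k => ((s.orderIsoOfFin hcard k : s) : Fin N) with hg
      have hAh_unit : IsUnit (Ah.submatrix id g) := (stmt5_li_iff Ah s hcard).1 hliAh
      have hdetAh : (Ah.submatrix id g).det ≠ 0 :=
        fun h0 => ((Matrix.isUnit_iff_isUnit_det _).1 hAh_unit).ne_zero (by rw [h0])
      -- extract a nonzero permutation term to get the degree sum
      have hterm : ∃ σ : Equiv.Perm (Fin Nt), ∏ k, Ah (σ k) (g k) ≠ 0 := by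
        by_contra hcon
        push_neg at hcon
        apply hdetAh
        rw [Matrix.det_apply]
        refine Finset.sum_eq_zero fun σ _ => ?_
        have : ∏ k, (Ah.submatrix id g) (σ k) k = 0 := by
          simpa [Matrix.submatrix_apply] using hcon σ
        rw [this, smul_zero]
      obtain ⟨σ, hσ⟩ := hterm
      have hdeg : ∀ k, rdeg (σ k) = cdeg (g k) := by
        intro k
        by_contra hne
        exact (Finset.prod_ne_zero_iff.1 hσ k (Finset.mem_univ k)) (by rw [hAh, if_neg hne])
      have hgsum : ∑ k, cdeg (g k) = ∑ i, rdeg i := by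
        rw [← Finset.sum_congr rfl (fun k _ => hdeg k), Equiv.sum_comp σ rdeg]
      have hsum : ∑ j ∈ s, cdeg j = ∑ i, rdeg i := by
        rw [← hsum_enum s hcard]; exact hgsum
      have hdetA : (A.submatrix id g).det ≠ 0 := by
        rw [stmt5_det_eq A Ah rdeg cdeg htri hAh g hgsum]; exact hdetAh
      have hliA : LinearIndependent ℝ (fun j : s => A.transpose (j : Fin N)) :=
        (stmt5_li_iff A s hcard).2
          ((Matrix.isUnit_iff_isUnit_det _).2 (isUnit_iff_ne_zero.2 hdetA))
      exact ⟨s, hcard, hliA, hsum⟩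
    · rintro ⟨s, hcard, hli, hsum⟩
      exact main s hcard hsum hli
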